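/- There exists a sign τ of the complete graph K₄ such that the toric ideal I_{(K₄,τ)} is not a complete intersection. Specifically, labeling V(K₄) = {v₁,v₂,v₃,v₄} with edges e₁=v₁v₂, e₂=v₂v₃, e₃=v₁v₃, e₄=v₁v₄, e₅=v₂v₄, e₆=v₃v₄, the sign with τ(e₄,v₁) = τ(e₅,v₂) = τ(e₆,v₃) = -1 and all other incidence signs +1 yields a toric ideal which is minimally generated by the three binomials e₁e₅ − e₃e₆, e₁e₄ − e₂e₆, e₂e₅ − e₃e₄, whereas the height r(K₄,τ) = |E| − |V| = 2. -/

import Mathlib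

variable {V : Type*}

/-- The product of τ(e,u)·τ(e,v) over all edge terms e = uv of a walk in a signed
graph (G,τ), where the sign τ assigns a unit ±1 to each incidence. -/
def walkSign (G : SimpleGraph V) (τ : Sym2 V → V → ℤˣ) :
    {u v : V} → G.Walk u v → ℤˣ
  | _, _, SimpleGraph.Walk.nil => 1
  | _, _, @SimpleGraph.Walk.cons _ _ a b _ _ p =>
      τ s(a, b) a * τ s(a, b) b * walkSign G τ p

/-- μ of a closed walk: (-1)^(number of unbalanced vertex terms). -/
def mu (G : SimpleGraph V) (τ : Sym2 V → V → ℤˣ) {u v : V} (w : G.Walk u v) : ℤˣ :=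
  (-1) ^ w.length * walkSign G τ w

/-- The i-th dart (oriented edge term) of a walk. -/
def dartAt {G : SimpleGraph V} {u v : V} (w : G.Walk u v) (i : Fin w.length) :
    G.Dart :=
  w.darts.get (Fin.cast w.length_darts.symm i)

/-- Cyclic successor on `Fin n`. -/
def csucc {n : ℕ} (i : Fin n) : Fin n := ⟨(i + 1) % n, Nat.mod_lt _ i.pos⟩

/-- `FlipRel G τ w κ`: κ assigns a sign ±1 to each edge term of the closed walk w,
flipping exactly at the unbalanced vertex terms (cyclically).  Such a κ records (up
to a global sign) the parity of the balanced section containing each edge term in the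
balanced section-decomposition of w, and a κ satisfying this relation exists iff w is
even. -/
def FlipRel (G : SimpleGraph V) (τ : Sym2 V → V → ℤˣ) {v : V} (w : G.Walk v v)
    (κ : Fin w.length → ℤˣ) : Prop :=
  ∀ i : Fin w.length,
    κ (csucc i) =
      -(τ (dartAt w i).edge (dartAt w i).toProd.2 *
          τ (dartAt w (csucc i)).edge (dartAt w i).toProd.2) * κ i

open MvPolynomial in
/-- The positive monomial B_w⁺ of the binomial associated with an even closed walk w,
relative to the section-parity assignment κ: the product of all edge terms lying in
the sections with κ = 1. -/
noncomputable def Bpos (K : Type*) [Field K] {G : SimpleGraph V} {v : V}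
    (w : G.Walk v v) (κ : Fin w.length → ℤˣ) : MvPolynomial G.edgeSet K :=
  ∏ i ∈ Finset.univ.filter (fun i => κ i = 1),
    X (⟨(dartAt w i).edge, (dartAt w i).edge_mem⟩ : G.edgeSet)

open MvPolynomial in
/-- The negative monomial B_w⁻: the product of all edge terms in sections with κ = -1. -/
noncomputable def Bneg (K : Type*) [Field K] {G : SimpleGraph V} {v : V}
    (w : G.Walk v v) (κ : Fin w.length → ℤˣ) : MvPolynomial G.edgeSet K :=
  ∏ i ∈ Finset.univ.filter (fun i => κ i = -1),
    X (⟨(dartAt w i).edge, (dartAt w i).edge_mem⟩ : G.edgeSet)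

open MvPolynomial in
/-- The toric ideal I_{(G,τ)} of a signed graph: the ideal of K[e : e ∈ E(G)]
generated by the binomials e^{b⁺} - e^{b⁻} over integer vectors b in the kernel of
the incidence matrix A(G,τ). -/
noncomputable def toricIdeal (K : Type*) [Field K] [DecidableEq V]
    (G : SimpleGraph V) [Fintype G.edgeSet] (τ : Sym2 V → V → ℤˣ) :
    Ideal (MvPolynomial G.edgeSet K) :=
  Ideal.span { f | ∃ b : G.edgeSet → ℤ,
    (∀ v : V, ∑ e : G.edgeSet,
      (if v ∈ (e : Sym2 V) then (τ e v : ℤ) else 0) * b e = 0) ∧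
    f = (∏ e : G.edgeSet, X e ^ (b e).toNat)
      - ∏ e : G.edgeSet, X e ^ (-(b e)).toNat }
/-- The number of connected components of (G,τ) containing no odd closed walk. -/
noncomputable def numBalanced (G : SimpleGraph V) (τ : Sym2 V → V → ℤˣ) : ℕ :=
  Nat.card {c : G.ConnectedComponent //
    ∀ v : V, G.connectedComponentMk v = c → ∀ w : G.Walk v v, mu G τ w = 1}

/-- A signed graph (G,τ) is a complete intersection if its toric ideal is generated
by r(G,τ) = |E(G)| - |V(G)| + (number of components without an odd closed walk)
elements (this number is the height of the toric ideal, and equals the sum over the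
connected components of the quantities r of the paper, so this agrees with the
componentwise definition for disconnected graphs). -/
def IsCI (K : Type*) [Field K] [DecidableEq V] (G : SimpleGraph V)
    [Fintype G.edgeSet] (τ : Sym2 V → V → ℤˣ) : Prop :=
  ∃ s : Finset (MvPolynomial G.edgeSet K),
    Ideal.span (s : Set (MvPolynomial G.edgeSet K)) = toricIdeal K G τ ∧
    (s.card : ℤ) = (Nat.card G.edgeSet : ℤ) - Nat.card V + numBalanced G τ
open MvPolynomial

instance : DecidableRel (⊤ : SimpleGraph (Fin 4)).Adj :=
  fun a b => decidable_of_iff (a ≠ b) (SimpleGraph.top_adj (v := a) (w := b)).symm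

/-- An edge of the complete graph K₄ = ⊤ on Fin 4. -/
def K4edge (a b : Fin 4) (h : a ≠ b) : (⊤ : SimpleGraph (Fin 4)).edgeSet :=
  ⟨s(a, b), (SimpleGraph.mem_edgeSet (G := (⊤ : SimpleGraph (Fin 4)))).mpr ((SimpleGraph.top_adj (v := a) (w := b)).mpr h)⟩

/-- The sign τ of K₄ with τ(e₄,v₁) = τ(e₅,v₂) = τ(e₆,v₃) = -1 (vertices v₁,…,v₄
labelled 0,…,3, e₄ = v₁v₄, e₅ = v₂v₄, e₆ = v₃v₄) and all other incidences +1. -/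
def tauK4 : Sym2 (Fin 4) → Fin 4 → ℤˣ := fun e v =>
  if (e = s(0, 3) ∧ v = 0) ∨ (e = s(1, 3) ∧ v = 1) ∨ (e = s(2, 3) ∧ v = 2)
  then -1 else 1


/-! ### Auxiliary setup for K₄ -/

abbrev E4 : Type := (⊤ : SimpleGraph (Fin 4)).edgeSet
def ε1 : E4 := K4edge 0 1 (by decide)
def ε2 : E4 := K4edge 1 2 (by decide)
def ε3 : E4 := K4edge 0 2 (by decide)
def ε4 : E4 := K4edge 0 3 (by decide)
def ε5 : E4 := K4edge 1 3 (by decide)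
def ε6 : E4 := K4edge 2 3 (by decide)

lemma huniv : (Finset.univ : Finset E4) = {ε1, ε2, ε3, ε4, ε5, ε6} := by decide

lemma sum_E4 {M : Type*} [AddCommMonoid M] (f : E4 → M) :
    ∑ e : E4, f e = f ε1 + (f ε2 + (f ε3 + (f ε4 + (f ε5 + f ε6)))) := by
  rw [huniv]
  rw [show ({ε1, ε2, ε3, ε4, ε5, ε6} : Finset E4)
      = insert ε1 (insert ε2 (insert ε3 (insert ε4 (insert ε5 {ε6})))) from rfl]
  rw [Finset.sum_insert (by decide), Finset.sum_insert (by decide),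
    Finset.sum_insert (by decide), Finset.sum_insert (by decide),
    Finset.sum_insert (by decide), Finset.sum_singleton]

lemma prod_E4 {M : Type*} [CommMonoid M] (f : E4 → M) :
    ∏ e : E4, f e = f ε1 * (f ε2 * (f ε3 * (f ε4 * (f ε5 * f ε6)))) := by
  rw [huniv]
  rw [show ({ε1, ε2, ε3, ε4, ε5, ε6} : Finset E4)
      = insert ε1 (insert ε2 (insert ε3 (insert ε4 (insert ε5 {ε6})))) from rfl]
  rw [Finset.prod_insert (by decide), Finset.prod_insert (by decide),
    Finset.prod_insert (by decide), Finset.prod_insert (by decide),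
    Finset.prod_insert (by decide), Finset.prod_singleton]

lemma kernel_structure (b : E4 → ℤ)
    (hb : ∀ v : Fin 4, ∑ e : E4,
      (if v ∈ (e : Sym2 (Fin 4)) then (tauK4 e v : ℤ) else 0) * b e = 0) :
    b ε3 = -b ε1 - b ε2 ∧ b ε4 = -b ε2 ∧ b ε5 = b ε1 + b ε2 ∧ b ε6 = -b ε1 := by
  have h0 := hb 0; have h1 := hb 1; have h2 := hb 2; have h3 := hb 3
  rw [sum_E4] at h0 h1 h2 h3
  simp only [show (if (0:Fin 4) ∈ (ε1:Sym2 (Fin 4)) then ((tauK4 ε1 0 : ℤˣ):ℤ) else 0) = 1 by decide,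
    show (if (0:Fin 4) ∈ (ε2:Sym2 (Fin 4)) then ((tauK4 ε2 0 : ℤˣ):ℤ) else 0) = 0 by decide,
    show (if (0:Fin 4) ∈ (ε3:Sym2 (Fin 4)) then ((tauK4 ε3 0 : ℤˣ):ℤ) else 0) = 1 by decide,
    show (if (0:Fin 4) ∈ (ε4:Sym2 (Fin 4)) then ((tauK4 ε4 0 : ℤˣ):ℤ) else 0) = -1 by decide,
    show (if (0:Fin 4) ∈ (ε5:Sym2 (Fin 4)) then ((tauK4 ε5 0 : ℤˣ):ℤ) else 0) = 0 by decide,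
    show (if (0:Fin 4) ∈ (ε6:Sym2 (Fin 4)) then ((tauK4 ε6 0 : ℤˣ):ℤ) else 0) = 0 by decide] at h0
  simp only [show (if (1:Fin 4) ∈ (ε1:Sym2 (Fin 4)) then ((tauK4 ε1 1 : ℤˣ):ℤ) else 0) = 1 by decide,
    show (if (1:Fin 4) ∈ (ε2:Sym2 (Fin 4)) then ((tauK4 ε2 1 : ℤˣ):ℤ) else 0) = 1 by decide,
    show (if (1:Fin 4) ∈ (ε3:Sym2 (Fin 4)) then ((tauK4 ε3 1 : ℤˣ):ℤ) else 0) = 0 by decide,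
    show (if (1:Fin 4) ∈ (ε4:Sym2 (Fin 4)) then ((tauK4 ε4 1 : ℤˣ):ℤ) else 0) = 0 by decide,
    show (if (1:Fin 4) ∈ (ε5:Sym2 (Fin 4)) then ((tauK4 ε5 1 : ℤˣ):ℤ) else 0) = -1 by decide,
    show (if (1:Fin 4) ∈ (ε6:Sym2 (Fin 4)) then ((tauK4 ε6 1 : ℤˣ):ℤ) else 0) = 0 by decide] at h1
  simp only [show (if (2:Fin 4) ∈ (ε1:Sym2 (Fin 4)) then ((tauK4 ε1 2 : ℤˣ):ℤ) else 0) = 0 by decide,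
    show (if (2:Fin 4) ∈ (ε2:Sym2 (Fin 4)) then ((tauK4 ε2 2 : ℤˣ):ℤ) else 0) = 1 by decide,
    show (if (2:Fin 4) ∈ (ε3:Sym2 (Fin 4)) then ((tauK4 ε3 2 : ℤˣ):ℤ) else 0) = 1 by decide,
    show (if (2:Fin 4) ∈ (ε4:Sym2 (Fin 4)) then ((tauK4 ε4 2 : ℤˣ):ℤ) else 0) = 0 by decide,
    show (if (2:Fin 4) ∈ (ε5:Sym2 (Fin 4)) then ((tauK4 ε5 2 : ℤˣ):ℤ) else 0) = 0 by decide,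
    show (if (2:Fin 4) ∈ (ε6:Sym2 (Fin 4)) then ((tauK4 ε6 2 : ℤˣ):ℤ) else 0) = -1 by decide] at h2
  simp only [show (if (3:Fin 4) ∈ (ε1:Sym2 (Fin 4)) then ((tauK4 ε1 3 : ℤˣ):ℤ) else 0) = 0 by decide,
    show (if (3:Fin 4) ∈ (ε2:Sym2 (Fin 4)) then ((tauK4 ε2 3 : ℤˣ):ℤ) else 0) = 0 by decide,
    show (if (3:Fin 4) ∈ (ε3:Sym2 (Fin 4)) then ((tauK4 ε3 3 : ℤˣ):ℤ) else 0) = 0 by decide,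
    show (if (3:Fin 4) ∈ (ε4:Sym2 (Fin 4)) then ((tauK4 ε4 3 : ℤˣ):ℤ) else 0) = 1 by decide,
    show (if (3:Fin 4) ∈ (ε5:Sym2 (Fin 4)) then ((tauK4 ε5 3 : ℤˣ):ℤ) else 0) = 1 by decide,
    show (if (3:Fin 4) ∈ (ε6:Sym2 (Fin 4)) then ((tauK4 ε6 3 : ℤˣ):ℤ) else 0) = 1 by decide] at h3
  refine ⟨by linarith, by linarith, by linarith, by linarith⟩

/-! ### The family of binomials P a c and the ideal J -/

open MvPolynomial

noncomputable def P (K : Type*) [Field K] (a c : ℤ) : MvPolynomial E4 K :=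
  X ε1 ^ a.toNat * X ε2 ^ c.toNat * X ε3 ^ (-a - c).toNat * X ε4 ^ (-c).toNat
      * X ε5 ^ (a + c).toNat * X ε6 ^ (-a).toNat
    - X ε1 ^ (-a).toNat * X ε2 ^ (-c).toNat * X ε3 ^ (a + c).toNat * X ε4 ^ c.toNat
      * X ε5 ^ (-a - c).toNat * X ε6 ^ a.toNat

noncomputable def g1' (K : Type*) [Field K] : MvPolynomial E4 K := X ε1 * X ε5 - X ε3 * X ε6
noncomputable def g2' (K : Type*) [Field K] : MvPolynomial E4 K := X ε1 * X ε4 - X ε2 * X ε6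
noncomputable def g3' (K : Type*) [Field K] : MvPolynomial E4 K := X ε2 * X ε5 - X ε3 * X ε4

noncomputable def J (K : Type*) [Field K] : Ideal (MvPolynomial E4 K) :=
  Ideal.span {g1' K, g2' K, g3' K}

section Pfacts
variable {K : Type*} [Field K]

lemma P_zero : P K 0 0 = 0 := by simp [P]

lemma P10 : P K 1 0 = g1' K := by
  simp only [P, g1', show ((1:ℤ)).toNat = 1 from rfl, show ((0:ℤ)).toNat = 0 from rfl,
    show ((-1:ℤ)).toNat = 0 from rfl, show ((-1:ℤ) - 0).toNat = 0 from rfl,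
    show ((1:ℤ) + 0).toNat = 1 from rfl, show ((-0:ℤ)).toNat = 0 from rfl,
    show ((1:ℤ) - 0).toNat = 1 from rfl]
  ring

lemma P1m1 : P K 1 (-1) = g2' K := by
  simp only [P, g2', show ((1:ℤ)).toNat = 1 from rfl, show ((-1:ℤ)).toNat = 0 from rfl,
    show ((-1:ℤ) - -1).toNat = 0 from rfl, show (-(-1:ℤ)).toNat = 1 from rfl,
    show ((1:ℤ) + -1).toNat = 0 from rfl]
  ring

lemma P01 : P K 0 1 = g3' K := by
  simp only [P, g3', show ((1:ℤ)).toNat = 1 from rfl, show ((0:ℤ)).toNat = 0 from rfl,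
    show ((-1:ℤ)).toNat = 0 from rfl, show ((-0:ℤ) - 1).toNat = 0 from rfl,
    show ((0:ℤ) + 1).toNat = 1 from rfl, show ((-0:ℤ)).toNat = 0 from rfl]
  ring

lemma P_neg (a c : ℤ) : P K a c = -P K (-a) (-c) := by
  simp only [P, neg_neg, sub_neg_eq_add]
  rw [show (-a + -c : ℤ) = -a - c by ring]
  ring

lemma step1 (a c : ℤ) (ha : 1 ≤ a) (hc : 0 ≤ c) :
    P K a c = (X ε1 ^ (a-1).toNat * X ε2 ^ c.toNat * X ε5 ^ (a+c-1).toNat) * P K 1 0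
      + (X ε3 * X ε6) * P K (a-1) c := by
  rw [P10]
  have e1 : a.toNat = (a-1).toNat + 1 := by omega
  have e2 : (a+c).toNat = (a+c-1).toNat + 1 := by omega
  have e3 : (-a).toNat = 0 := by omega
  have e4 : (-a-c).toNat = 0 := by omega
  have e5 : (-(a-1)).toNat = 0 := by omega
  have e6 : (-(a-1)-c).toNat = 0 := by omega
  have e7 : ((a-1)+c).toNat = (a+c-1).toNat := by omega
  have e8 : (-c).toNat = 0 := by omega
  simp only [P, g1', e1, e2, e3, e4, e5, e6, e7, e8, pow_succ, pow_zero]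
  ring

lemma step2 (a c : ℤ) (ha : 1 ≤ a) (hc : c ≤ -1) :
    P K a c = (X ε1 ^ (a-1).toNat * X ε4 ^ (-c-1).toNat * X ε3 ^ (-a-c).toNat
        * X ε5 ^ (a+c).toNat) * P K 1 (-1)
      + (X ε2 * X ε6) * P K (a-1) (c+1) := by
  rw [P1m1]
  have e1 : a.toNat = (a-1).toNat + 1 := by omega
  have e2 : (-c).toNat = (-c-1).toNat + 1 := by omega
  have e3 : c.toNat = 0 := by omega
  have e4 : (-a).toNat = 0 := by omega
  have e5 : (c+1).toNat = 0 := by omega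
  have e6 : (-(c+1)).toNat = (-c-1).toNat := by omega
  have e7 : (-(a-1)).toNat = 0 := by omega
  have e8 : (-(a-1)-(c+1)).toNat = (-a-c).toNat := by omega
  have e9 : ((a-1)+(c+1)).toNat = (a+c).toNat := by omega
  simp only [P, g2', e1, e2, e3, e4, e5, e6, e7, e8, e9, pow_succ, pow_zero]
  ring

lemma step3 (c : ℤ) (hc : 1 ≤ c) :
    P K 0 c = (X ε2 ^ (c-1).toNat * X ε5 ^ (c-1).toNat) * P K 0 1
      + (X ε3 * X ε4) * P K 0 (c-1) := by
  rw [P01]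
  have e1 : c.toNat = (c-1).toNat + 1 := by omega
  have e2 : (-c).toNat = 0 := by omega
  have e3 : (-(c-1)).toNat = 0 := by omega
  simp only [P, g3', e1, e2, e3, neg_zero, zero_add, zero_sub, add_zero, sub_zero,
    pow_succ, pow_zero, show ((0:ℤ)).toNat = 0 from rfl]
  ring

lemma L2 : ∀ c : ℤ, P K 0 c ∈ J K := by
  have base : ∀ n : ℕ, P K 0 (n : ℤ) ∈ J K := by
    intro n
    induction n with
    | zero => simp [P_zero]
    | succ n ih =>
      rw [show ((n+1 : ℕ) : ℤ) = (n : ℤ) + 1 by push_cast; ring]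
      rw [step3 _ (by omega)]
      rw [show ((n : ℤ) + 1 - 1) = (n : ℤ) by ring]
      exact add_mem (Ideal.mul_mem_left _ _ (Ideal.subset_span (by rw [P01]; simp [J])))
        (Ideal.mul_mem_left _ _ ih)
  intro c
  rcases le_or_gt 0 c with h | h
  · rw [show c = ((c.toNat : ℕ) : ℤ) by omega]; exact base _
  · rw [P_neg, neg_zero, show -c = ((((-c).toNat : ℕ)) : ℤ) by omega]
    exact neg_mem (base _)

lemma L3 : ∀ n : ℕ, ∀ c : ℤ, P K (n : ℤ) c ∈ J K := by
  intro n
  induction n with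
  | zero => exact fun c => L2 c
  | succ n ih =>
    intro c
    rcases le_or_gt 0 c with h | h
    · rw [show ((n+1 : ℕ) : ℤ) = ((n:ℤ)+1) by push_cast; ring, step1 _ _ (by omega) h,
        show ((n:ℤ)+1-1) = (n:ℤ) by ring]
      exact add_mem (Ideal.mul_mem_left _ _ (Ideal.subset_span (by rw [P10]; simp [J])))
        (Ideal.mul_mem_left _ _ (ih c))
    · rw [show ((n+1 : ℕ) : ℤ) = ((n:ℤ)+1) by push_cast; ring, step2 _ _ (by omega) (by omega),
        show ((n:ℤ)+1-1) = (n:ℤ) by ring]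
      exact add_mem (Ideal.mul_mem_left _ _ (Ideal.subset_span (by rw [P1m1]; simp [J])))
        (Ideal.mul_mem_left _ _ (ih (c+1)))

lemma P_mem (a c : ℤ) : P K a c ∈ J K := by
  rcases le_or_gt 0 a with h | h
  · rw [show a = ((a.toNat : ℕ) : ℤ) by omega]; exact L3 _ c
  · rw [P_neg, show -a = (((-a).toNat : ℕ) : ℤ) by omega]
    exact neg_mem (L3 _ _)

lemma binom_eq (b : E4 → ℤ) (h3 : b ε3 = -b ε1 - b ε2) (h4 : b ε4 = -b ε2)
    (h5 : b ε5 = b ε1 + b ε2) (h6 : b ε6 = -b ε1) :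
    (∏ e : E4, (X e : MvPolynomial E4 K) ^ (b e).toNat)
        - ∏ e : E4, (X e : MvPolynomial E4 K) ^ (-(b e)).toNat
      = P K (b ε1) (b ε2) := by
  rw [prod_E4 (fun e => (X e : MvPolynomial E4 K) ^ (b e).toNat),
    prod_E4 (fun e => (X e : MvPolynomial E4 K) ^ (-(b e)).toNat), P, h3, h4, h5, h6]
  rw [show -(-b ε1 - b ε2) = b ε1 + b ε2 by ring, show -(-b ε2) = b ε2 by ring,
      show -(b ε1 + b ε2) = -b ε1 - b ε2 by ring, show -(-b ε1) = b ε1 by ring]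
  ring

end Pfacts

/-! ### The kernel vectors -/

def bfun (a c : ℤ) : E4 → ℤ := fun e =>
  if e = ε1 then a else if e = ε2 then c else if e = ε3 then -a-c
  else if e = ε4 then -c else if e = ε5 then a+c else -a

lemma bfun_e1 (a c : ℤ) : bfun a c ε1 = a := by simp [bfun]
lemma bfun_e2 (a c : ℤ) : bfun a c ε2 = c := by simp +decide [bfun]
lemma bfun_e3 (a c : ℤ) : bfun a c ε3 = -a-c := by simp +decide [bfun]
lemma bfun_e4 (a c : ℤ) : bfun a c ε4 = -c := by simp +decide [bfun]
lemma bfun_e5 (a c : ℤ) : bfun a c ε5 = a+c := by simp +decide [bfun]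
lemma bfun_e6 (a c : ℤ) : bfun a c ε6 = -a := by simp +decide [bfun]

lemma bfun_kernel (a c : ℤ) : ∀ v : Fin 4, ∑ e : E4,
    (if v ∈ (e : Sym2 (Fin 4)) then (tauK4 e v : ℤ) else 0) * bfun a c e = 0 := by
  intro v
  rw [sum_E4]
  rw [bfun_e1, bfun_e2, bfun_e3, bfun_e4, bfun_e5, bfun_e6]
  rcases (by decide : ∀ w : Fin 4, w = 0 ∨ w = 1 ∨ w = 2 ∨ w = 3) v with rfl | rfl | rfl | rfl
  · simp only [show (if (0:Fin 4) ∈ (ε1:Sym2 (Fin 4)) then ((tauK4 ε1 0 : ℤˣ):ℤ) else 0) = 1 by decide,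
      show (if (0:Fin 4) ∈ (ε2:Sym2 (Fin 4)) then ((tauK4 ε2 0 : ℤˣ):ℤ) else 0) = 0 by decide,
      show (if (0:Fin 4) ∈ (ε3:Sym2 (Fin 4)) then ((tauK4 ε3 0 : ℤˣ):ℤ) else 0) = 1 by decide,
      show (if (0:Fin 4) ∈ (ε4:Sym2 (Fin 4)) then ((tauK4 ε4 0 : ℤˣ):ℤ) else 0) = -1 by decide,
      show (if (0:Fin 4) ∈ (ε5:Sym2 (Fin 4)) then ((tauK4 ε5 0 : ℤˣ):ℤ) else 0) = 0 by decide,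
      show (if (0:Fin 4) ∈ (ε6:Sym2 (Fin 4)) then ((tauK4 ε6 0 : ℤˣ):ℤ) else 0) = 0 by decide]
    ring
  · simp only [show (if (1:Fin 4) ∈ (ε1:Sym2 (Fin 4)) then ((tauK4 ε1 1 : ℤˣ):ℤ) else 0) = 1 by decide,
      show (if (1:Fin 4) ∈ (ε2:Sym2 (Fin 4)) then ((tauK4 ε2 1 : ℤˣ):ℤ) else 0) = 1 by decide,
      show (if (1:Fin 4) ∈ (ε3:Sym2 (Fin 4)) then ((tauK4 ε3 1 : ℤˣ):ℤ) else 0) = 0 by decide,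
      show (if (1:Fin 4) ∈ (ε4:Sym2 (Fin 4)) then ((tauK4 ε4 1 : ℤˣ):ℤ) else 0) = 0 by decide,
      show (if (1:Fin 4) ∈ (ε5:Sym2 (Fin 4)) then ((tauK4 ε5 1 : ℤˣ):ℤ) else 0) = -1 by decide,
      show (if (1:Fin 4) ∈ (ε6:Sym2 (Fin 4)) then ((tauK4 ε6 1 : ℤˣ):ℤ) else 0) = 0 by decide]
    ring
  · simp only [show (if (2:Fin 4) ∈ (ε1:Sym2 (Fin 4)) then ((tauK4 ε1 2 : ℤˣ):ℤ) else 0) = 0 by decide,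
      show (if (2:Fin 4) ∈ (ε2:Sym2 (Fin 4)) then ((tauK4 ε2 2 : ℤˣ):ℤ) else 0) = 1 by decide,
      show (if (2:Fin 4) ∈ (ε3:Sym2 (Fin 4)) then ((tauK4 ε3 2 : ℤˣ):ℤ) else 0) = 1 by decide,
      show (if (2:Fin 4) ∈ (ε4:Sym2 (Fin 4)) then ((tauK4 ε4 2 : ℤˣ):ℤ) else 0) = 0 by decide,
      show (if (2:Fin 4) ∈ (ε5:Sym2 (Fin 4)) then ((tauK4 ε5 2 : ℤˣ):ℤ) else 0) = 0 by decide,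
      show (if (2:Fin 4) ∈ (ε6:Sym2 (Fin 4)) then ((tauK4 ε6 2 : ℤˣ):ℤ) else 0) = -1 by decide]
    ring
  · simp only [show (if (3:Fin 4) ∈ (ε1:Sym2 (Fin 4)) then ((tauK4 ε1 3 : ℤˣ):ℤ) else 0) = 0 by decide,
      show (if (3:Fin 4) ∈ (ε2:Sym2 (Fin 4)) then ((tauK4 ε2 3 : ℤˣ):ℤ) else 0) = 0 by decide,
      show (if (3:Fin 4) ∈ (ε3:Sym2 (Fin 4)) then ((tauK4 ε3 3 : ℤˣ):ℤ) else 0) = 0 by decide,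
      show (if (3:Fin 4) ∈ (ε4:Sym2 (Fin 4)) then ((tauK4 ε4 3 : ℤˣ):ℤ) else 0) = 1 by decide,
      show (if (3:Fin 4) ∈ (ε5:Sym2 (Fin 4)) then ((tauK4 ε5 3 : ℤˣ):ℤ) else 0) = 1 by decide,
      show (if (3:Fin 4) ∈ (ε6:Sym2 (Fin 4)) then ((tauK4 ε6 3 : ℤˣ):ℤ) else 0) = 1 by decide]
    ring

/-! ### The toric ideal equals J -/

lemma toric_eq_J (K : Type*) [Field K] :
    toricIdeal K (⊤ : SimpleGraph (Fin 4)) tauK4 = J K := by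
  apply le_antisymm
  · rw [toricIdeal, Ideal.span_le]
    rintro f ⟨b, hb, rfl⟩
    obtain ⟨h3, h4, h5, h6⟩ := kernel_structure b hb
    rw [SetLike.mem_coe, binom_eq b h3 h4 h5 h6]
    exact P_mem _ _
  · rw [J, Ideal.span_le]
    rintro f hf
    simp only [Set.mem_insert_iff, Set.mem_singleton_iff] at hf
    rw [toricIdeal]
    rcases hf with rfl | rfl | rfl
    · refine Ideal.subset_span ⟨bfun 1 0, bfun_kernel 1 0, ?_⟩
      rw [binom_eq (bfun 1 0) (by rw [bfun_e1, bfun_e2, bfun_e3])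
        (by rw [bfun_e2, bfun_e4]) (by rw [bfun_e1, bfun_e2, bfun_e5])
        (by rw [bfun_e1, bfun_e6]), bfun_e1, bfun_e2, P10]
    · refine Ideal.subset_span ⟨bfun 1 (-1), bfun_kernel 1 (-1), ?_⟩
      rw [binom_eq (bfun 1 (-1)) (by rw [bfun_e1, bfun_e2, bfun_e3])
        (by rw [bfun_e2, bfun_e4]) (by rw [bfun_e1, bfun_e2, bfun_e5])
        (by rw [bfun_e1, bfun_e6]), bfun_e1, bfun_e2, P1m1]
    · refine Ideal.subset_span ⟨bfun 0 1, bfun_kernel 0 1, ?_⟩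
      rw [binom_eq (bfun 0 1) (by rw [bfun_e1, bfun_e2, bfun_e3])
        (by rw [bfun_e2, bfun_e4]) (by rw [bfun_e1, bfun_e2, bfun_e5])
        (by rw [bfun_e1, bfun_e6]), bfun_e1, bfun_e2, P01]

/-! ### Minimal number of generators is at least three -/

noncomputable def pr : E4 → E4 → (E4 →₀ ℕ) := fun a b =>
  Finsupp.single a 1 + Finsupp.single b 1

section Min
variable {K : Type*} [Field K]

lemma coeff_XX (a b : E4) (D : E4 →₀ ℕ) :
    coeff D (X a * X b : MvPolynomial E4 K) = if pr a b = D then 1 else 0 := by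
  rw [X, X, monomial_mul, coeff_monomial, one_mul]; rfl

lemma pair_ne {a b c d : E4} (x : E4) (h : pr a b x ≠ pr c d x) : pr a b ≠ pr c d :=
  fun e => h (by rw [e])

lemma pr_apply (a b x : E4) :
    pr a b x = (if a = x then 1 else 0) + (if b = x then 1 else 0) := by
  simp [pr, Finsupp.single_apply]

lemma sum_pair (x y : E4 →₀ ℕ) :
    ((x + y).sum fun _ n => n) = (x.sum fun _ n => n) + (y.sum fun _ n => n) :=
  Finsupp.sum_add_index' (fun _ => rfl) (fun _ _ _ => rfl)

lemma deg2_pair (a b : E4) : ((pr a b).sum fun _ n => n) = 2 := by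
  rw [pr, sum_pair, Finsupp.sum_single_index rfl, Finsupp.sum_single_index rfl]

lemma sum_zero_imp (x : E4 →₀ ℕ) (h : (x.sum fun _ n => n) = 0) : x = 0 := by
  ext a
  by_cases ha : a ∈ x.support
  · exact (Finset.sum_eq_zero_iff.mp h) a ha
  · simpa [Finsupp.notMem_support_iff] using ha

end Min

noncomputable def Low (K : Type*) [Field K] : Ideal (MvPolynomial E4 K) where
  carrier := {f | ∀ d : E4 →₀ ℕ, (d.sum fun _ n => n) < 2 → coeff d f = 0}
  add_mem' := fun hf hg d hd => by rw [coeff_add, hf d hd, hg d hd, add_zero]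
  zero_mem' := fun d _ => by simp
  smul_mem' := fun p f hf d hd => by
    rw [smul_eq_mul, coeff_mul]
    apply Finset.sum_eq_zero
    rintro ⟨x, y⟩ hxy
    rw [Finset.HasAntidiagonal.mem_antidiagonal] at hxy
    have : (y.sum fun _ n => n) < 2 := by
      have := sum_pair x y
      rw [hxy] at this
      omega
    rw [hf y this, mul_zero]

section Min2
variable {K : Type*} [Field K]

lemma XX_mem_Low (a b c d : E4) :
    (X a * X b - X c * X d : MvPolynomial E4 K) ∈ Low K := by
  intro D hD
  rw [coeff_sub, coeff_XX, coeff_XX, if_neg, if_neg, sub_zero]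
  · rintro rfl; rw [deg2_pair] at hD; omega
  · rintro rfl; rw [deg2_pair] at hD; omega

lemma key_coeff {f : MvPolynomial E4 K} (hf : f ∈ Low K) (p : MvPolynomial E4 K)
    (D : E4 →₀ ℕ) (hD : (D.sum fun _ n => n) = 2) :
    coeff D (p * f) = coeff 0 p * coeff D f := by
  rw [coeff_mul]
  rw [Finset.sum_eq_single_of_mem (0, D) (Finset.HasAntidiagonal.mem_antidiagonal.mpr (zero_add D))]
  intro b hb hne
  rw [Finset.HasAntidiagonal.mem_antidiagonal] at hb
  by_cases hx : b.1 = 0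
  · exact absurd (Prod.ext hx (by rw [← hb, hx, zero_add])) hne
  · have hx1 : 1 ≤ b.1.sum fun _ n => n := by
      rcases Nat.eq_zero_or_pos (b.1.sum fun _ n => n) with h | h
      · exact absurd (sum_zero_imp b.1 h) hx
      · omega
    have hy : (b.2.sum fun _ n => n) < 2 := by
      have := sum_pair b.1 b.2; rw [hb] at this; omega
    rw [hf b.2 hy, mul_zero]

noncomputable def T (K : Type*) [Field K] : MvPolynomial E4 K →ₗ[K] (Fin 3 → K) :=
  LinearMap.pi ![lcoeff K (pr ε1 ε5), lcoeff K (pr ε1 ε4), lcoeff K (pr ε2 ε5)]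

lemma T_apply (f : MvPolynomial E4 K) :
    T K f = ![coeff (pr ε1 ε5) f, coeff (pr ε1 ε4) f, coeff (pr ε2 ε5) f] := by
  funext i
  fin_cases i <;> rfl

lemma Tg1 : T K (g1' K) = ![1, 0, 0] := by
  rw [T_apply]
  have h1 : coeff (pr ε1 ε5) (g1' K) = 1 := by
    rw [g1', coeff_sub, coeff_XX, coeff_XX, if_pos rfl,
      if_neg (pair_ne ε1 (by simp +decide [pr_apply])), sub_zero]
  have h2 : coeff (pr ε1 ε4) (g1' K) = 0 := by
    rw [g1', coeff_sub, coeff_XX, coeff_XX,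
      if_neg (pair_ne ε5 (by simp +decide [pr_apply])),
      if_neg (pair_ne ε3 (by simp +decide [pr_apply])), sub_zero]
  have h3 : coeff (pr ε2 ε5) (g1' K) = 0 := by
    rw [g1', coeff_sub, coeff_XX, coeff_XX,
      if_neg (pair_ne ε1 (by simp +decide [pr_apply])),
      if_neg (pair_ne ε2 (by simp +decide [pr_apply])), sub_zero]
  rw [h1, h2, h3]

lemma Tg2 : T K (g2' K) = ![0, 1, 0] := by
  rw [T_apply]
  have h1 : coeff (pr ε1 ε5) (g2' K) = 0 := by
    rw [g2', coeff_sub, coeff_XX, coeff_XX,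
      if_neg (pair_ne ε4 (by simp +decide [pr_apply])),
      if_neg (pair_ne ε1 (by simp +decide [pr_apply])), sub_zero]
  have h2 : coeff (pr ε1 ε4) (g2' K) = 1 := by
    rw [g2', coeff_sub, coeff_XX, coeff_XX, if_pos rfl,
      if_neg (pair_ne ε1 (by simp +decide [pr_apply])), sub_zero]
  have h3 : coeff (pr ε2 ε5) (g2' K) = 0 := by
    rw [g2', coeff_sub, coeff_XX, coeff_XX,
      if_neg (pair_ne ε1 (by simp +decide [pr_apply])),
      if_neg (pair_ne ε5 (by simp +decide [pr_apply])), sub_zero]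
  rw [h1, h2, h3]

lemma Tg3 : T K (g3' K) = ![0, 0, 1] := by
  rw [T_apply]
  have h1 : coeff (pr ε1 ε5) (g3' K) = 0 := by
    rw [g3', coeff_sub, coeff_XX, coeff_XX,
      if_neg (pair_ne ε1 (by simp +decide [pr_apply])),
      if_neg (pair_ne ε1 (by simp +decide [pr_apply])), sub_zero]
  have h2 : coeff (pr ε1 ε4) (g3' K) = 0 := by
    rw [g3', coeff_sub, coeff_XX, coeff_XX,
      if_neg (pair_ne ε1 (by simp +decide [pr_apply])),
      if_neg (pair_ne ε1 (by simp +decide [pr_apply])), sub_zero]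
  have h3 : coeff (pr ε2 ε5) (g3' K) = 1 := by
    rw [g3', coeff_sub, coeff_XX, coeff_XX, if_pos rfl,
      if_neg (pair_ne ε2 (by simp +decide [pr_apply])), sub_zero]
  rw [h1, h2, h3]

lemma J_le_Low : J K ≤ Low K := by
  rw [J, Ideal.span_le]
  rintro f hf
  simp only [Set.mem_insert_iff, Set.mem_singleton_iff] at hf
  rcases hf with rfl | rfl | rfl
  · exact XX_mem_Low _ _ _ _
  · exact XX_mem_Low _ _ _ _
  · exact XX_mem_Low _ _ _ _

lemma card_ge (s : Finset (MvPolynomial E4 K))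
    (hs : Ideal.span (s : Set (MvPolynomial E4 K)) = J K) : 3 ≤ s.card := by
  classical
  have span_T : ∀ f ∈ J K,
      T K f ∈ Submodule.span K (T K '' (s : Set (MvPolynomial E4 K))) := by
    intro f hf
    rw [← hs] at hf
    obtain ⟨c, -, hc⟩ := Submodule.mem_span_finset.mp hf
    rw [← hc, map_sum]
    apply Submodule.sum_mem
    intro σ hσ
    have hσL : σ ∈ Low K := J_le_Low (hs ▸ Ideal.subset_span hσ)
    have hT : T K (c σ • σ) = (coeff 0 (c σ)) • T K σ := by
      rw [smul_eq_mul, T_apply, T_apply]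
      funext i
      fin_cases i <;> simp [key_coeff hσL, deg2_pair]
    rw [hT]
    exact Submodule.smul_mem _ _ (Submodule.subset_span ⟨σ, hσ, rfl⟩)
  have hg1 : T K (g1' K) ∈ Submodule.span K (T K '' s) :=
    span_T _ (Ideal.subset_span (by simp [J]))
  have hg2 : T K (g2' K) ∈ Submodule.span K (T K '' s) :=
    span_T _ (Ideal.subset_span (by simp [J]))
  have hg3 : T K (g3' K) ∈ Submodule.span K (T K '' s) :=
    span_T _ (Ideal.subset_span (by simp [J]))
  rw [Tg1] at hg1; rw [Tg2] at hg2; rw [Tg3] at hg3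
  have htop : Submodule.span K (T K '' s) = ⊤ := by
    rw [eq_top_iff]
    rintro v -
    have hv : v = v 0 • (![1,0,0] : Fin 3 → K) + v 1 • ![0,1,0] + v 2 • ![0,0,1] := by
      funext i
      fin_cases i <;> simp
    rw [hv]
    exact add_mem (add_mem (Submodule.smul_mem _ _ hg1) (Submodule.smul_mem _ _ hg2))
      (Submodule.smul_mem _ _ hg3)
  have hle := finrank_span_finset_le_card (s.image (T K)) (R := K)
  rw [Set.finrank, Finset.coe_image, htop, finrank_top, Module.finrank_pi] at hle
  simpa using hle.trans (Finset.card_image_le)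

end Min2

/-! ### numBalanced = 0 -/

def tri (a b c : Fin 4) (h1 : (⊤ : SimpleGraph (Fin 4)).Adj a b)
    (h2 : (⊤ : SimpleGraph (Fin 4)).Adj b c) (h3 : (⊤ : SimpleGraph (Fin 4)).Adj c a) :
    (⊤ : SimpleGraph (Fin 4)).Walk a a :=
  .cons h1 (.cons h2 (.cons h3 .nil))

lemma mu_tri_ne_one (a b c : Fin 4) (h1 : (⊤ : SimpleGraph (Fin 4)).Adj a b)
    (h2 : (⊤ : SimpleGraph (Fin 4)).Adj b c) (h3 : (⊤ : SimpleGraph (Fin 4)).Adj c a)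
    (hτ : tauK4 s(a,b) a * tauK4 s(a,b) b * (tauK4 s(b,c) b * tauK4 s(b,c) c
      * (tauK4 s(c,a) c * tauK4 s(c,a) a * 1)) = 1) :
    mu (⊤ : SimpleGraph (Fin 4)) tauK4 (tri a b c h1 h2 h3) ≠ 1 := by
  simp only [mu, walkSign, tri, SimpleGraph.Walk.length_cons, SimpleGraph.Walk.length_nil, hτ]
  decide

lemma numBalanced_K4 : numBalanced (⊤ : SimpleGraph (Fin 4)) tauK4 = 0 := by
  have he : IsEmpty {c : (⊤ : SimpleGraph (Fin 4)).ConnectedComponent //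
      ∀ v : Fin 4, (⊤ : SimpleGraph (Fin 4)).connectedComponentMk v = c →
        ∀ w : (⊤ : SimpleGraph (Fin 4)).Walk v v,
          mu (⊤ : SimpleGraph (Fin 4)) tauK4 w = 1} := by
    constructor
    rintro ⟨c, hc⟩
    obtain ⟨v, rfl⟩ := c.exists_rep
    fin_cases v
    · exact mu_tri_ne_one 0 3 1 (by decide) (by decide) (by decide) (by decide)
        (hc 0 rfl (tri 0 3 1 (by decide) (by decide) (by decide)))
    · exact mu_tri_ne_one 1 0 3 (by decide) (by decide) (by decide) (by decide)
        (hc 1 rfl (tri 1 0 3 (by decide) (by decide) (by decide)))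
    · exact mu_tri_ne_one 2 0 3 (by decide) (by decide) (by decide) (by decide)
        (hc 2 rfl (tri 2 0 3 (by decide) (by decide) (by decide)))
    · exact mu_tri_ne_one 3 0 1 (by decide) (by decide) (by decide) (by decide)
        (hc 3 rfl (tri 3 0 1 (by decide) (by decide) (by decide)))
  rw [numBalanced, Nat.card_eq_zero]
  exact Or.inl he

lemma card_E4 : Nat.card (⊤ : SimpleGraph (Fin 4)).edgeSet = 6 := by
  rw [Nat.card_eq_fintype_card]; decide

/-- There is a sign τ of K₄ whose toric ideal is not a complete
intersection: with the specific sign above, I_{(K₄,τ)} is minimally generated by the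
three binomials e₁e₅ − e₃e₆, e₁e₄ − e₂e₆, e₂e₅ − e₃e₄ (e₁ = v₁v₂, e₂ = v₂v₃,
e₃ = v₁v₃, e₄ = v₁v₄, e₅ = v₂v₄, e₆ = v₃v₄), whereas the height
r(K₄,τ) = |E| − |V| = 2. -/
theorem K4_not_CI (K : Type*) [Field K] :
    toricIdeal K (⊤ : SimpleGraph (Fin 4)) tauK4 =
      Ideal.span {(X (K4edge 0 1 (by decide)) * X (K4edge 1 3 (by decide))
            - X (K4edge 0 2 (by decide)) * X (K4edge 2 3 (by decide))
              : MvPolynomial (⊤ : SimpleGraph (Fin 4)).edgeSet K),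
          X (K4edge 0 1 (by decide)) * X (K4edge 0 3 (by decide))
            - X (K4edge 1 2 (by decide)) * X (K4edge 2 3 (by decide)),
          X (K4edge 1 2 (by decide)) * X (K4edge 1 3 (by decide))
            - X (K4edge 0 2 (by decide)) * X (K4edge 0 3 (by decide))} ∧
    (∀ s : Finset (MvPolynomial (⊤ : SimpleGraph (Fin 4)).edgeSet K),
      Ideal.span (s : Set (MvPolynomial (⊤ : SimpleGraph (Fin 4)).edgeSet K))
          = toricIdeal K (⊤ : SimpleGraph (Fin 4)) tauK4 → 3 ≤ s.card) ∧
    ((Nat.card (⊤ : SimpleGraph (Fin 4)).edgeSet : ℤ) - Nat.card (Fin 4)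
        + numBalanced (⊤ : SimpleGraph (Fin 4)) tauK4 = 2) ∧
    ¬ IsCI K (⊤ : SimpleGraph (Fin 4)) tauK4 := by
  have hTI := toric_eq_J K
  have hheight : (Nat.card (⊤ : SimpleGraph (Fin 4)).edgeSet : ℤ) - Nat.card (Fin 4)
      + numBalanced (⊤ : SimpleGraph (Fin 4)) tauK4 = 2 := by
    rw [card_E4, numBalanced_K4, Nat.card_eq_fintype_card]
    simp
  refine ⟨?_, ?_, hheight, ?_⟩
  · rw [hTI, J, g1', g2', g3']
    rfl
  · intro s hs
    exact card_ge s (hs.trans hTI)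
  · rintro ⟨s, hspan, hcard⟩
    have h3 := card_ge s (hspan.trans hTI)
    rw [hheight] at hcard
    omega
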